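/- The density of F = N_1·N_2 (product of independent standard Gaussians) is p(x) = (1/π) K_0(|x|) for x ≠ 0, where K_0 is the modified Bessel function of the second kind of order 0. -/

import Mathlib

open MeasureTheory ProbabilityTheory Real Set
open scoped ENNReal

/-- The joint law of two independent standard Gaussians. -/
noncomputable def gauss2 : Measure (ℝ × ℝ) :=
  (gaussianReal 0 1).prod (gaussianReal 0 1)

/-- Modified Bessel function of the second kind, order 0: K₀(x) = ∫₀^∞ e^{-x cosh t} dt. -/
noncomputable def besselK0 (x : ℝ) : ℝ :=
  ∫ t in Set.Ioi (0 : ℝ), Real.exp (-x * Real.cosh t)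

/-- One-dimensional change of variables for lower Lebesgue integrals. -/
lemma lintegral_image_deriv {s : Set ℝ} {f f' : ℝ → ℝ} (hs : MeasurableSet s)
    (hf' : ∀ x ∈ s, HasDerivWithinAt f (f' x) s x) (hf : Set.InjOn f s) (g : ℝ → ℝ≥0∞) :
    ∫⁻ x in f '' s, g x = ∫⁻ x in s, ENNReal.ofReal |f' x| * g (f x) := by
  simpa only [ContinuousLinearMap.det_toSpanSingleton] using
    lintegral_image_eq_lintegral_abs_det_fderiv_mul volume hs
      (fun x hx => (hf' x hx).hasFDerivWithinAt) hf g

lemma self_le_cosh {t : ℝ} (ht : 0 ≤ t) : t ≤ Real.cosh t := by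
  have h1 : t ≤ Real.sinh t := Real.self_le_sinh_iff.mpr ht
  have h2 : Real.sinh t ≤ Real.cosh t := by
    rw [Real.sinh_eq, Real.cosh_eq]
    have := Real.exp_pos (-t); linarith
  linarith

lemma integrableOn_exp_neg_mul_cosh {a : ℝ} (ha : 0 < a) :
    IntegrableOn (fun t => Real.exp (-a * Real.cosh t)) (Set.Ioi 0) := by
  apply Integrable.mono (exp_neg_integrableOn_Ioi 0 ha)
  · exact ((Real.measurable_exp.comp
      ((measurable_const.mul Real.measurable_cosh)))).aestronglyMeasurable
  · filter_upwards [ae_restrict_mem measurableSet_Ioi] with t ht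
    simp only [Real.norm_eq_abs, Real.abs_exp]
    apply Real.exp_le_exp.mpr
    have := self_le_cosh (le_of_lt ht)
    nlinarith

lemma besselK0_nonneg (a : ℝ) : 0 ≤ besselK0 a :=
  integral_nonneg fun t => (Real.exp_pos _).le

lemma lintegral_ofReal_exp_neg_cosh {a : ℝ} (ha : 0 < a) :
    ∫⁻ t in Set.Ioi (0:ℝ), ENNReal.ofReal (Real.exp (-(a * Real.cosh t)))
      = ENNReal.ofReal (besselK0 a) := by
  rw [besselK0, ofReal_integral_eq_lintegral_ofReal]
  · simp_rw [neg_mul]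
  · simpa only [neg_mul, IntegrableOn] using integrableOn_exp_neg_mul_cosh ha
  · filter_upwards with t using (Real.exp_pos _).le

lemma gaussianPDFReal_even (y : ℝ) : gaussianPDFReal 0 1 (-y) = gaussianPDFReal 0 1 y := by
  simp [gaussianPDFReal, neg_sq]

lemma lintegral_Iio_eq_Ioi {g : ℝ → ℝ≥0∞} (hg : ∀ x, g (-x) = g x) :
    ∫⁻ x in Set.Iio (0:ℝ), g x = ∫⁻ x in Set.Ioi 0, g x := by
  have himg : Set.Iio (0:ℝ) = (fun x : ℝ => -x) '' Set.Ioi 0 := by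
    ext y
    simp only [Set.mem_image, Set.mem_Iio, Set.mem_Ioi]
    constructor
    · intro hy; exact ⟨-y, by linarith, by ring⟩
    · rintro ⟨x, hx, rfl⟩; linarith
  rw [himg, lintegral_image_deriv measurableSet_Ioi
    (fun x _ => (hasDerivAt_neg x).hasDerivWithinAt) (neg_injective.injOn) g]
  simp [hg]

lemma lintegral_split (f : ℝ → ℝ≥0∞) :
    ∫⁻ x, f x = (∫⁻ x in Set.Iio (0:ℝ), f x) + ∫⁻ x in Set.Ioi 0, f x := by
  rw [← lintegral_add_compl f (measurableSet_singleton (0:ℝ))]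
  have h1 : ∫⁻ x in ({(0:ℝ)} : Set ℝ), f x = 0 := by
    rw [Measure.restrict_eq_zero.mpr (by simp), lintegral_zero_measure]
  rw [h1, zero_add, ← Set.Iio_union_Ioi,
    lintegral_union measurableSet_Ioi
      ((Set.Iio_disjoint_Ici le_rfl).mono_right Set.Ioi_subset_Ici_self)]

lemma lintegral_even_eq_two_mul {g : ℝ → ℝ≥0∞} (hg : ∀ x, g (-x) = g x) :
    ∫⁻ x, g x = 2 * ∫⁻ x in Set.Ioi (0:ℝ), g x := by
  rw [lintegral_split g, lintegral_Iio_eq_Ioi hg, two_mul]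

/-- The key pointwise computation: the integral over the first Gaussian variable. -/
lemma W_eq {u : ℝ} (hu : u ≠ 0) :
    ∫⁻ x, gaussianPDF 0 1 x * ENNReal.ofReal |x⁻¹| * gaussianPDF 0 1 (u * x⁻¹) ∂volume
      = ENNReal.ofReal ((1 / Real.pi) * besselK0 |u|) := by
  have ha : 0 < |u| := abs_pos.mpr hu
  set a := |u| with ha_def
  set c := Real.sqrt a with hc_def
  have hc : 0 < c := Real.sqrt_pos.mpr ha
  set ψ : ℝ → ℝ := fun x => gaussianPDFReal 0 1 x * |x⁻¹| * gaussianPDFReal 0 1 (u * x⁻¹)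
    with hψ_def
  have hstep1 : ∀ x : ℝ,
      gaussianPDF 0 1 x * ENNReal.ofReal |x⁻¹| * gaussianPDF 0 1 (u * x⁻¹)
        = ENNReal.ofReal (ψ x) := by
    intro x
    rw [hψ_def, gaussianPDF, gaussianPDF,
      ENNReal.ofReal_mul (mul_nonneg (gaussianPDFReal_nonneg 0 1 x) (abs_nonneg _)),
      ENNReal.ofReal_mul (gaussianPDFReal_nonneg 0 1 x)]
  simp_rw [hstep1]
  have hψ_even : ∀ x, ψ (-x) = ψ x := by
    intro x
    simp only [hψ_def, inv_neg, mul_neg, abs_neg, gaussianPDFReal_even]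
  rw [lintegral_even_eq_two_mul (fun x => by rw [hψ_even])]
  -- substitution x = c * exp t on (0, ∞)
  have himg : Set.Ioi (0:ℝ) = (fun t : ℝ => c * Real.exp t) '' Set.univ := by
    ext y
    simp only [Set.image_univ, Set.mem_range, Set.mem_Ioi]
    constructor
    · intro hy
      refine ⟨Real.log (y / c), ?_⟩
      rw [Real.exp_log (by positivity)]
      field_simp
    · rintro ⟨t, rfl⟩; positivity
  have hderiv : ∀ t ∈ Set.univ, HasDerivWithinAt (fun t : ℝ => c * Real.exp t)
      (c * Real.exp t) Set.univ t :=
    fun t _ => ((Real.hasDerivAt_exp t).const_mul c).hasDerivWithinAt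
  have hinj : Set.InjOn (fun t : ℝ => c * Real.exp t) Set.univ := by
    intro t1 _ t2 _ h
    exact Real.exp_injective (mul_left_cancel₀ hc.ne' h)
  rw [himg, lintegral_image_deriv MeasurableSet.univ hderiv hinj, Measure.restrict_univ]
  have hpoint : ∀ t : ℝ,
      ENNReal.ofReal |c * Real.exp t| * ENNReal.ofReal (ψ (c * Real.exp t))
        = ENNReal.ofReal ((2 * Real.pi)⁻¹ * Real.exp (-(a * Real.cosh (2 * t)))) := by
    intro t
    have hx : (0:ℝ) < c * rexp t := by positivity
    rw [abs_of_pos hx, ← ENNReal.ofReal_mul hx.le]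
    congr 1
    have h2π : (0:ℝ) < 2 * π := by positivity
    have hc2 : c ^ 2 = a := Real.sq_sqrt ha.le
    have hu2 : u ^ 2 = a ^ 2 := (sq_abs u).symm
    have hE2 : rexp (2 * t) = rexp t ^ 2 := by rw [two_mul, Real.exp_add]; ring
    have harg1 : -(c * rexp t) ^ 2 / 2 = -(a * rexp (2 * t)) / 2 := by
      rw [hE2, mul_pow, hc2]
    have harg2 : -(u * (c * rexp t)⁻¹) ^ 2 / 2 = -(a * rexp (-(2 * t))) / 2 := by
      rw [Real.exp_neg, hE2, mul_pow, inv_pow, mul_pow, hc2, hu2]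
      field_simp
    simp only [hψ_def, gaussianPDFReal, NNReal.coe_one, mul_one, sub_zero]
    rw [harg1, harg2, abs_of_pos (inv_pos.mpr hx), Real.cosh_eq]
    have hA : (Real.sqrt (2 * π))⁻¹ * (Real.sqrt (2 * π))⁻¹ = (2 * π)⁻¹ := by
      rw [← mul_inv, Real.mul_self_sqrt h2π.le]
    calc c * rexp t * ((Real.sqrt (2*π))⁻¹ * rexp (-(a * rexp (2*t)) / 2) * (c * rexp t)⁻¹
          * ((Real.sqrt (2*π))⁻¹ * rexp (-(a * rexp (-(2*t))) / 2)))
        = (c * rexp t * (c * rexp t)⁻¹) * ((Real.sqrt (2*π))⁻¹ * (Real.sqrt (2*π))⁻¹)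
          * (rexp (-(a * rexp (2*t)) / 2) * rexp (-(a * rexp (-(2*t))) / 2)) := by ring
      _ = (2 * π)⁻¹ * rexp (-(a * ((rexp (2*t) + rexp (-(2*t))) / 2))) := by
          rw [mul_inv_cancel₀ hx.ne', hA, ← Real.exp_add, one_mul]
          congr 1
          ring
  simp_rw [hpoint]
  -- the integrand of t is even
  have hg2_even : ∀ t : ℝ,
      ENNReal.ofReal ((2 * Real.pi)⁻¹ * Real.exp (-(a * Real.cosh (2 * (-t)))))
        = ENNReal.ofReal ((2 * Real.pi)⁻¹ * Real.exp (-(a * Real.cosh (2 * t)))) := by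
    intro t
    rw [mul_neg, Real.cosh_neg]
  rw [lintegral_even_eq_two_mul hg2_even]
  -- substitution t = s / 2 on (0, ∞)
  have himg2 : Set.Ioi (0:ℝ) = (fun s : ℝ => s / 2) '' Set.Ioi 0 := by
    ext y
    simp only [Set.mem_image, Set.mem_Ioi]
    constructor
    · intro hy; exact ⟨2 * y, by linarith, by ring⟩
    · rintro ⟨x, hx, rfl⟩; linarith
  have hderiv2 : ∀ s ∈ Set.Ioi (0:ℝ), HasDerivWithinAt (fun s : ℝ => s / 2)
      (1 / 2) (Set.Ioi 0) s :=
    fun s _ => ((hasDerivAt_id s).div_const 2).hasDerivWithinAt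
  have hinj2 : Set.InjOn (fun s : ℝ => s / 2) (Set.Ioi 0) := by
    intro s1 _ s2 _ h
    dsimp at h
    linarith
  rw [himg2, lintegral_image_deriv measurableSet_Ioi hderiv2 hinj2]
  have hpoint2 : ∀ s : ℝ,
      ENNReal.ofReal |1 / 2| * ENNReal.ofReal ((2 * Real.pi)⁻¹
          * Real.exp (-(a * Real.cosh (2 * (s / 2)))))
        = ENNReal.ofReal ((4 * Real.pi)⁻¹) * ENNReal.ofReal (Real.exp (-(a * Real.cosh s))) := by
    intro s
    rw [← ENNReal.ofReal_mul (abs_nonneg _), ← ENNReal.ofReal_mul (by positivity)]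
    congr 1
    rw [show 2 * (s / 2) = s by ring, abs_of_pos (by norm_num : (0:ℝ) < 1/2)]
    rw [← mul_assoc]
    congr 1
    field_simp
    ring
  simp_rw [hpoint2]
  rw [lintegral_const_mul' _ _ ENNReal.ofReal_ne_top, lintegral_ofReal_exp_neg_cosh ha]
  -- final arithmetic
  have h2 : (2 : ℝ≥0∞) = ENNReal.ofReal 2 := by simp
  rw [h2, ← ENNReal.ofReal_mul (by positivity), ← ENNReal.ofReal_mul (by positivity),
    ← ENNReal.ofReal_mul (by positivity)]
  congr 1
  have hπ : Real.pi ≠ 0 := Real.pi_ne_zero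
  field_simp
  ring

/-- The density of the normal product F = N₁N₂ is x ↦ (1/π) K₀(|x|). -/
theorem normal_product_density (s : Set ℝ) (hs : MeasurableSet s) :
    Measure.map (fun p : ℝ × ℝ => p.1 * p.2) gauss2 s
      = ∫⁻ x in s, ENNReal.ofReal ((1 / Real.pi) * besselK0 |x|) ∂volume := by
  classical
  have hmul : Measurable fun p : ℝ × ℝ => p.1 * p.2 := measurable_fst.mul measurable_snd
  have hgr : gaussianReal 0 1 = volume.withDensity (gaussianPDF 0 1) :=
    gaussianReal_of_var_ne_zero 0 one_ne_zero
  have hpdf : Measurable (gaussianPDF 0 1) := (measurable_gaussianPDFReal 0 1).ennreal_ofReal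
  have hpdf_ne_top : ∀ x : ℝ, gaussianPDF 0 1 x ≠ ⊤ := fun x => ENNReal.ofReal_ne_top
  have hind : Measurable (s.indicator (1 : ℝ → ℝ≥0∞)) := measurable_one.indicator hs
  have hind_ne_top : ∀ u : ℝ, s.indicator (1 : ℝ → ℝ≥0∞) u ≠ ⊤ := by
    intro u; by_cases h : u ∈ s <;> simp [h]
  have hae0 : ∀ᵐ x : ℝ ∂volume, x ≠ 0 := by
    have h' : {x : ℝ | ¬ x ≠ 0} = {0} := by ext; simp
    rw [ae_iff, h']
    exact measure_singleton 0
  rw [Measure.map_apply hmul hs]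
  have h1 : gauss2 ((fun p : ℝ × ℝ => p.1 * p.2) ⁻¹' s)
      = ∫⁻ p : ℝ × ℝ, s.indicator 1 (p.1 * p.2) ∂gauss2 := by
    rw [← lintegral_indicator_one (hmul hs)]
    apply lintegral_congr
    intro p
    by_cases h : p.1 * p.2 ∈ s <;> simp [Set.indicator, h, Set.mem_preimage]
  rw [h1, gauss2, lintegral_prod (fun p : ℝ × ℝ => s.indicator 1 (p.1 * p.2))
    ((hind.comp hmul).aemeasurable)]
  simp only
  have h2 : ∀ x : ℝ, ∫⁻ y, s.indicator 1 (x * y) ∂(gaussianReal 0 1)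
      = ∫⁻ y, gaussianPDF 0 1 y * s.indicator 1 (x * y) ∂volume := by
    intro x
    rw [hgr, lintegral_withDensity_eq_lintegral_mul volume hpdf
      (g := fun y => s.indicator 1 (x * y)) (hind.comp (measurable_const_mul x))]
    rfl
  simp_rw [h2]
  have houter : Measurable fun x : ℝ =>
      ∫⁻ y, gaussianPDF 0 1 y * s.indicator 1 (x * y) ∂volume := by
    apply Measurable.lintegral_prod_right
    exact (hpdf.comp measurable_snd).mul
      (hind.comp (measurable_fst.mul measurable_snd))
  rw [hgr, lintegral_withDensity_eq_lintegral_mul volume hpdf houter]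
  simp only [Pi.mul_apply]
  have hx_step : ∀ x : ℝ, x ≠ 0 →
      gaussianPDF 0 1 x * ∫⁻ y, gaussianPDF 0 1 y * s.indicator 1 (x * y) ∂volume
        = ∫⁻ u, gaussianPDF 0 1 x * ENNReal.ofReal |x⁻¹| * gaussianPDF 0 1 (u * x⁻¹)
            * s.indicator 1 u ∂volume := by
    intro x hx
    have hH : Measurable fun u : ℝ => gaussianPDF 0 1 (u * x⁻¹) * s.indicator 1 u :=
      (hpdf.comp (measurable_mul_const _)).mul hind
    have hkey : (fun y : ℝ => gaussianPDF 0 1 y * s.indicator 1 (x * y))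
        = fun y => (fun u => gaussianPDF 0 1 (u * x⁻¹) * s.indicator 1 u) (x * y) := by
      funext y
      simp only
      rw [mul_comm x y, mul_assoc, mul_inv_cancel₀ hx, mul_one]
    rw [hkey, ← lintegral_map hH (measurable_const_mul x), Real.map_volume_mul_left hx,
      lintegral_smul_measure, smul_eq_mul,
      ← lintegral_const_mul' _ _ ENNReal.ofReal_ne_top,
      ← lintegral_const_mul' _ _ (hpdf_ne_top x)]
    apply lintegral_congr
    intro u
    ring
  have hae : (fun x => gaussianPDF 0 1 x
        * ∫⁻ y, gaussianPDF 0 1 y * s.indicator 1 (x * y) ∂volume)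
      =ᵐ[volume] fun x => ∫⁻ u, gaussianPDF 0 1 x * ENNReal.ofReal |x⁻¹|
        * gaussianPDF 0 1 (u * x⁻¹) * s.indicator 1 u ∂volume := by
    filter_upwards [hae0] with x hx using hx_step x hx
  rw [lintegral_congr_ae hae]
  have hK : AEMeasurable (Function.uncurry fun x u : ℝ =>
      gaussianPDF 0 1 x * ENNReal.ofReal |x⁻¹| * gaussianPDF 0 1 (u * x⁻¹)
        * s.indicator 1 u) ((volume : Measure ℝ).prod volume) := by
    apply Measurable.aemeasurable
    have : (Function.uncurry fun x u : ℝ =>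
        gaussianPDF 0 1 x * ENNReal.ofReal |x⁻¹| * gaussianPDF 0 1 (u * x⁻¹)
          * s.indicator 1 u)
        = fun p : ℝ × ℝ => gaussianPDF 0 1 p.1 * ENNReal.ofReal |p.1⁻¹|
          * gaussianPDF 0 1 (p.2 * p.1⁻¹) * s.indicator 1 p.2 := rfl
    rw [this]
    exact (((hpdf.comp measurable_fst).mul
      (measurable_fst.inv.abs.ennreal_ofReal)).mul
      (hpdf.comp (measurable_snd.mul measurable_fst.inv))).mul
      (hind.comp measurable_snd)
  rw [lintegral_lintegral_swap hK]
  have h3 : ∀ u : ℝ, ∫⁻ x, gaussianPDF 0 1 x * ENNReal.ofReal |x⁻¹|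
        * gaussianPDF 0 1 (u * x⁻¹) * s.indicator 1 u ∂volume
      = (∫⁻ x, gaussianPDF 0 1 x * ENNReal.ofReal |x⁻¹|
        * gaussianPDF 0 1 (u * x⁻¹) ∂volume) * s.indicator 1 u :=
    fun u => lintegral_mul_const' _ _ (hind_ne_top u)
  simp_rw [h3]
  have h4 : (fun u : ℝ => (∫⁻ x, gaussianPDF 0 1 x * ENNReal.ofReal |x⁻¹|
        * gaussianPDF 0 1 (u * x⁻¹) ∂volume) * s.indicator 1 u)
      = s.indicator (fun u => ∫⁻ x, gaussianPDF 0 1 x * ENNReal.ofReal |x⁻¹|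
        * gaussianPDF 0 1 (u * x⁻¹) ∂volume) := by
    funext u
    by_cases h : u ∈ s <;> simp [h]
  rw [h4, lintegral_indicator hs]
  apply lintegral_congr_ae
  apply ae_restrict_of_ae
  filter_upwards [hae0] with u hu using W_eq hu
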